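/- Under the substitution x_i = p_i(u_1,...,u_n)/i, where p_i = u_1^i + ... + u_n^i is the i-th power sum in n variables, the Schur-Weierstrass polynomial σ_λ satisfies σ_λ(p_1, p_2/2, p_3/3, ...) = s_λ(u_1, ..., u_n), the ordinary Schur polynomial in u_1,...,u_n. -/

import Mathlib

open MvPolynomial in
/-- The generating series `Σ_{i≥1} x_i t^i` with coefficients in `ℚ[x_1, x_2, …]`. -/
noncomputable def swGen : PowerSeries (MvPolynomial ℕ ℚ) :=
  PowerSeries.mk fun i => if i = 0 then 0 else MvPolynomial.X i

/-- The elementary Schur–Weierstrass polynomial `σ_k`, i.e. the coefficient of `t^k`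
in `exp (Σ_{i≥1} x_i t^i) = Σ_m (Σ x_i t^i)^m / m!` (the terms with `m > k` do not
contribute to the coefficient of `t^k`). -/
noncomputable def sw (k : ℕ) : MvPolynomial ℕ ℚ :=
  ∑ m ∈ Finset.range (k + 1),
    (Nat.factorial m : ℚ)⁻¹ • PowerSeries.coeff (R := MvPolynomial ℕ ℚ) k (swGen ^ m)

/-- `σ_k` for integer index, with `σ_k = 0` for `k < 0`. -/
noncomputable def swZ (k : ℤ) : MvPolynomial ℕ ℚ :=
  if 0 ≤ k then sw k.toNat else 0

/-- The Schur–Weierstrass polynomial `σ_λ = det (σ_{λ_i + j - i})_{1 ≤ i,j ≤ m}`. -/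
noncomputable def swSchur {m : ℕ} (lam : Fin m → ℕ) : MvPolynomial ℕ ℚ :=
  Matrix.det (Matrix.of fun i j : Fin m => swZ ((lam i : ℤ) + (j : ℕ) - (i : ℕ)))

/-- Substitution `x_i ↦ p_i(u_1,…,u_n)/i`, where `p_i` is the `i`-th power sum. -/
noncomputable def powerSub (n : ℕ) : MvPolynomial ℕ ℚ →ₐ[ℚ] MvPolynomial (Fin n) ℚ :=
  MvPolynomial.aeval fun i : ℕ => ((i : ℚ))⁻¹ • MvPolynomial.psum (Fin n) ℚ i

/-- `h_k` for integer index, with `h_k = 0` for `k < 0`. -/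
noncomputable def hZ (n : ℕ) (k : ℤ) : MvPolynomial (Fin n) ℚ :=
  if 0 ≤ k then MvPolynomial.hsymm (Fin n) ℚ k.toNat else 0

/-- The Schur polynomial `s_λ(u_1,…,u_n)`, via the Jacobi–Trudi formula
`s_λ = det (h_{λ_i + j - i})`; it vanishes when `λ` has more than `n` parts. -/
noncomputable def schurPoly (n : ℕ) {m : ℕ} (lam : Fin m → ℕ) :
    MvPolynomial (Fin n) ℚ :=
  Matrix.det (Matrix.of fun i j : Fin m => hZ n ((lam i : ℤ) + (j : ℕ) - (i : ℕ)))


set_option linter.unusedSectionVars false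
set_option linter.unusedVariables false

section ExpAux

open PowerSeries Finset

variable {A : Type*} [CommRing A] [Algebra ℚ A]

lemma coeff_pow_eq_zero' {f : PowerSeries A} (hf : constantCoeff (R := A) f = 0) :
    ∀ {m k : ℕ}, k < m → coeff (R := A) k (f ^ m) = 0 := by
  intro m
  induction m with
  | zero => intro k hk; omega
  | succ m ih =>
    intro k hk
    rw [pow_succ, coeff_mul]
    apply Finset.sum_eq_zero
    intro p hp
    rw [Finset.HasAntidiagonal.mem_antidiagonal] at hp
    by_cases h1 : p.1 < m
    · rw [ih h1, zero_mul]
    · have : p.2 = 0 := by omega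
      have : coeff (R := A) p.2 f = 0 := by rw [this]; rw [coeff_zero_eq_constantCoeff]; exact hf
      rw [this, mul_zero]

/-- coefficient of `t^k` in `exp f`. -/
noncomputable def expC (f : PowerSeries A) (k : ℕ) : A :=
  ∑ m ∈ Finset.range (k + 1), (Nat.factorial m : ℚ)⁻¹ • coeff (R := A) k (f ^ m)

lemma expC_eq_sum_range {f : PowerSeries A} (hf : constantCoeff (R := A) f = 0) {k N : ℕ}
    (hN : k + 1 ≤ N) :
    expC f k = ∑ m ∈ Finset.range N, (Nat.factorial m : ℚ)⁻¹ • coeff (R := A) k (f ^ m) := by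
  apply Finset.sum_subset (Finset.range_subset_range.2 hN)
  intro m _ hm
  rw [Finset.mem_range, not_lt] at hm
  rw [coeff_pow_eq_zero' hf (by omega), smul_zero]

lemma expC_zero {f : PowerSeries A} : expC f 0 = 1 := by
  simp [expC]

lemma expC_rec {f : PowerSeries A} (hf : constantCoeff (R := A) f = 0) (k : ℕ) :
    expC f (k + 1) * ((k : A) + 1) =
      ∑ i ∈ Finset.range (k + 1), (coeff (R := A) (i + 1) f * ((i : A) + 1)) * expC f (k - i) := by
  have big : ∀ j, j ≤ k → expC f j = ∑ m ∈ Finset.range (k + 1), (Nat.factorial m : ℚ)⁻¹ • coeff (R := A) j (f ^ m) := by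
    intro j hj; exact expC_eq_sum_range hf (by omega)
  have lhs : expC f (k+1) = ∑ m ∈ Finset.range (k + 2), (Nat.factorial m : ℚ)⁻¹ • coeff (R := A) (k+1) (f ^ m) := rfl
  rw [lhs]
  rw [show (∑ i ∈ Finset.range (k + 1), (coeff (R := A) (i + 1) f * ((i : A) + 1)) * expC f (k - i)) = ∑ i ∈ Finset.range (k + 1), (coeff (R := A) (i + 1) f * ((i : A) + 1)) * (∑ m ∈ Finset.range (k + 1), (Nat.factorial m : ℚ)⁻¹ • coeff (R := A) (k-i) (f ^ m)) from Finset.sum_congr rfl fun i hi => by rw [big (k - i) (by omega)]]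
  rw [Finset.sum_mul]
  have step1 : ∀ m, ((Nat.factorial m : ℚ)⁻¹ • coeff (R := A) (k+1) (f ^ m)) * ((k : A) + 1)
      = (Nat.factorial m : ℚ)⁻¹ • coeff (R := A) k (PowerSeries.derivative (R := A) (f ^ m)) := by
    intro m
    rw [coeff_derivative, smul_mul_assoc]
  simp_rw [step1]
  rw [Finset.sum_range_succ']
  have h0 : (Nat.factorial 0 : ℚ)⁻¹ • coeff (R := A) k (PowerSeries.derivative (R := A) (f ^ 0)) = 0 := by
    simp
  rw [h0, add_zero]
  have step2 : ∀ m : ℕ, (Nat.factorial (m+1) : ℚ)⁻¹ •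
        coeff (R := A) k (PowerSeries.derivative (R := A) (f ^ (m+1)))
      = (Nat.factorial m : ℚ)⁻¹ • coeff (R := A) k (PowerSeries.derivative (R := A) f * f ^ m) := by
    intro m
    rw [Derivation.leibniz_pow]
    simp only [Nat.add_sub_cancel, smul_eq_mul, map_nsmul]
    rw [← Nat.cast_smul_eq_nsmul ℚ, smul_smul, Nat.factorial_succ]
    congr 2
    · push_cast
      rw [mul_comm]
      field_simp
    · ring
  simp_rw [step2, coeff_mul, Finset.Nat.sum_antidiagonal_eq_sum_range_succ_mk, coeff_derivative,
    Finset.smul_sum]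
  rw [Finset.sum_comm]
  apply Finset.sum_congr rfl
  intro i _
  rw [Finset.mul_sum]
  apply Finset.sum_congr rfl
  intro m _
  rw [mul_smul_comm]

end ExpAux

section HsymmAux
open MvPolynomial Finset

variable {σ : Type*} [Fintype σ] [DecidableEq σ] {R : Type*} [CommSemiring R]

lemma prod_map_X_eq_monomial (s : Multiset σ) :
    ((s.map (X : σ → MvPolynomial σ R)).prod) = monomial (Multiset.toFinsupp s) 1 := by
  induction s using Multiset.induction with
  | empty => simp
  | cons a s ih =>
      rw [Multiset.map_cons, Multiset.prod_cons, ih, ← Multiset.singleton_add,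
        Multiset.toFinsupp_add, Multiset.toFinsupp_singleton, X, monomial_mul, one_mul]

lemma sum_univ_finsupp (d : σ →₀ ℕ) : ∑ x : σ, d x = d.sum fun _ => id := by
  rw [Finsupp.sum_fintype _ _ fun _ => rfl]; rfl

lemma hsymm_eq_sum_monomial (k : ℕ) :
    hsymm σ R k = ∑ d ∈ Finset.univ.finsuppAntidiag k, monomial d 1 := by
  rw [hsymm]
  refine Finset.sum_bij' (fun s _ => Multiset.toFinsupp s.1)
    (fun d hd => ⟨Finsupp.toMultiset d, by
      rw [Finsupp.card_toMultiset, ← sum_univ_finsupp]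
      exact (Finset.mem_finsuppAntidiag.mp hd).1⟩) ?_ ?_ ?_ ?_ ?_
  · intro s _
    simp only [Finset.mem_finsuppAntidiag]
    refine ⟨?_, fun x _ => Finset.mem_univ x⟩
    rw [sum_univ_finsupp, Multiset.toFinsupp_sum_eq, s.2]
  · intro d _; exact Finset.mem_univ _
  · intro s _
    exact Subtype.ext (Multiset.toFinsupp_toMultiset _)
  · intro d _
    exact Finsupp.toMultiset_toFinsupp _
  · intro s _
    exact prod_map_X_eq_monomial s.1



lemma sum_univ_single (j : σ) (m : ℕ) : ∑ x : σ, Finsupp.single j m x = m := by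
  rw [Finset.sum_eq_single j (fun x _ hx => Finsupp.single_eq_of_ne' (Ne.symm hx))
    (fun h => absurd (Finset.mem_univ j) h)]
  exact Finsupp.single_eq_same

lemma sigma_bij (j : σ) (k : ℕ) :
    ∑ p ∈ (Finset.univ.finsuppAntidiag (k+1)).sigma (fun d => Finset.range (d j)),
        (monomial p.1 1 : MvPolynomial σ R)
      = ∑ q ∈ (Finset.range (k+1)).sigma (fun i => Finset.univ.finsuppAntidiag (k-i)),
        (monomial (Finsupp.single j (q.1 + 1) + q.2) 1 : MvPolynomial σ R) := by
  refine Finset.sum_bij'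
    (fun p _ => (⟨p.2, p.1 - Finsupp.single j (p.2 + 1)⟩ : Σ _ : ℕ, σ →₀ ℕ))
    (fun q _ => (⟨Finsupp.single j (q.1 + 1) + q.2, q.1⟩ : Σ _ : σ →₀ ℕ, ℕ))
    ?_ ?_ ?_ ?_ ?_
  · rintro ⟨d, i⟩ hp
    rw [Finset.mem_sigma, Finset.mem_finsuppAntidiag, Finset.mem_range] at hp
    obtain ⟨⟨hsum, -⟩, hi⟩ := hp
    dsimp only at hsum hi ⊢
    have hle : Finsupp.single j (i + 1) ≤ d := by
      rw [Finsupp.single_le_iff]; omega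
    have hdj : d j ≤ k + 1 := by
      rw [← hsum]
      exact Finset.single_le_sum (fun x _ => Nat.zero_le _) (Finset.mem_univ j)
    rw [Finset.mem_sigma, Finset.mem_range, Finset.mem_finsuppAntidiag]
    dsimp only
    refine ⟨by omega, ?_, fun x _ => Finset.mem_univ x⟩
    have hd : Finsupp.single j (i + 1) + (d - Finsupp.single j (i + 1)) = d :=
      add_tsub_cancel_of_le hle
    have h2 : (Finset.univ.sum ⇑(Finsupp.single j (i+1)))
        + Finset.univ.sum ⇑(d - Finsupp.single j (i+1)) = Finset.univ.sum ⇑d := by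
      rw [← Finset.sum_add_distrib]
      refine Finset.sum_congr rfl fun x _ => ?_
      conv_rhs => rw [← hd]
      rw [Finsupp.add_apply]
    have h3 : Finset.univ.sum ⇑(Finsupp.single j (i+1)) = i + 1 := sum_univ_single j (i+1)
    omega
  · rintro ⟨i, e⟩ hq
    rw [Finset.mem_sigma, Finset.mem_range, Finset.mem_finsuppAntidiag] at hq
    obtain ⟨hi, hsum, -⟩ := hq
    dsimp only at hsum hi ⊢
    rw [Finset.mem_sigma, Finset.mem_finsuppAntidiag, Finset.mem_range]
    dsimp only
    refine ⟨⟨?_, fun x _ => Finset.mem_univ x⟩, ?_⟩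
    · have h2 : Finset.univ.sum ⇑(Finsupp.single j (i + 1) + e) =
          (∑ x : σ, Finsupp.single j (i+1) x) + Finset.univ.sum ⇑e := by
        simp only [Finsupp.coe_add, Pi.add_apply, Finset.sum_add_distrib]
      rw [h2, sum_univ_single, hsum]; omega
    · simp only [Finsupp.coe_add, Pi.add_apply, Finsupp.single_eq_same]
      omega
  · rintro ⟨d, i⟩ hp
    rw [Finset.mem_sigma, Finset.mem_finsuppAntidiag, Finset.mem_range] at hp
    obtain ⟨⟨hsum, -⟩, hi⟩ := hp
    dsimp only at hsum hi ⊢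
    have hle : Finsupp.single j (i + 1) ≤ d := by
      rw [Finsupp.single_le_iff]; omega
    congr 1
    exact add_tsub_cancel_of_le hle
  · rintro ⟨i, e⟩ _
    dsimp only
    congr 1
    exact add_tsub_cancel_left _ _
  · rintro ⟨d, i⟩ hp
    rw [Finset.mem_sigma, Finset.mem_finsuppAntidiag, Finset.mem_range] at hp
    obtain ⟨⟨hsum, -⟩, hi⟩ := hp
    dsimp only at hsum hi ⊢
    have hle : Finsupp.single j (i + 1) ≤ d := by
      rw [Finsupp.single_le_iff]; omega
    rw [add_tsub_cancel_of_le hle]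

lemma newton_hsymm (k : ℕ) :
    (k + 1) • hsymm σ R (k + 1) =
      ∑ i ∈ Finset.range (k + 1), psum σ R (i + 1) * hsymm σ R (k - i) := by
  simp_rw [hsymm_eq_sum_monomial, psum, Finset.sum_mul, Finset.mul_sum]
  have hval : ∀ (j : σ) (i : ℕ) (e : σ →₀ ℕ),
      (X j : MvPolynomial σ R) ^ (i + 1) * monomial e 1
        = monomial (Finsupp.single j (i + 1) + e) 1 := by
    intro j i e
    rw [X_pow_eq_monomial, monomial_mul, one_mul]
  calc (k + 1) • ∑ d ∈ Finset.univ.finsuppAntidiag (k+1), (monomial d 1 : MvPolynomial σ R)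
      = ∑ d ∈ Finset.univ.finsuppAntidiag (k+1), ∑ j : σ,
          ∑ i ∈ Finset.range (d j), (monomial d 1 : MvPolynomial σ R) := by
        rw [Finset.smul_sum]
        refine Finset.sum_congr rfl fun d hd => ?_
        have hsum := (Finset.mem_finsuppAntidiag.mp hd).1
        simp only [Finset.sum_const, Finset.card_range]
        rw [← Finset.sum_smul, hsum]
    _ = ∑ j : σ, ∑ p ∈ (Finset.univ.finsuppAntidiag (k+1)).sigma (fun d => Finset.range (d j)),
          (monomial p.1 1 : MvPolynomial σ R) := by
        rw [Finset.sum_comm]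
        refine Finset.sum_congr rfl fun j _ => ?_
        rw [Finset.sum_sigma]
    _ = ∑ j : σ, ∑ i ∈ Finset.range (k+1), ∑ e ∈ Finset.univ.finsuppAntidiag (k-i),
          (monomial (Finsupp.single j (i + 1) + e) 1 : MvPolynomial σ R) := by
        refine Finset.sum_congr rfl fun j _ => ?_
        rw [sigma_bij, Finset.sum_sigma]
    _ = ∑ i ∈ Finset.range (k + 1), ∑ j : σ, ∑ e ∈ Finset.univ.finsuppAntidiag (k - i),
          (X j : MvPolynomial σ R) ^ (i+1) * monomial e 1 := by
        rw [Finset.sum_comm]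
        exact Finset.sum_congr rfl fun i _ => Finset.sum_congr rfl fun j _ =>
          Finset.sum_congr rfl fun e _ => (hval j i e).symm

end HsymmAux

section MainProof

open PowerSeries Finset MvPolynomial

variable {n : ℕ}

lemma swAux_constantCoeff : PowerSeries.constantCoeff (R := MvPolynomial ℕ ℚ) swGen = 0 := by
  simp [swGen, ← PowerSeries.coeff_zero_eq_constantCoeff]

noncomputable def phiPS (n : ℕ) : PowerSeries (MvPolynomial (Fin n) ℚ) :=
  PowerSeries.map (powerSub n : MvPolynomial ℕ ℚ →+* MvPolynomial (Fin n) ℚ) swGen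

lemma phiPS_constantCoeff : PowerSeries.constantCoeff (phiPS n) = 0 := by
  simp [phiPS, ← PowerSeries.coeff_zero_eq_constantCoeff, swGen]

lemma phiPS_coeff_succ (i : ℕ) :
    PowerSeries.coeff (i + 1) (phiPS n) = ((i + 1 : ℕ) : ℚ)⁻¹ • psum (Fin n) ℚ (i + 1) := by
  simp only [phiPS, PowerSeries.coeff_map, swGen, PowerSeries.coeff_mk]
  rw [if_neg (Nat.succ_ne_zero i)]
  simp only [powerSub]
  exact MvPolynomial.aeval_X _ _

lemma powerSub_sw (k : ℕ) : powerSub n (sw k) = expC (phiPS n) k := by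
  rw [sw, expC, map_sum]
  refine Finset.sum_congr rfl fun m _ => ?_
  rw [map_smul]
  congr 1
  show (powerSub n : MvPolynomial ℕ ℚ →+* MvPolynomial (Fin n) ℚ) _ = _
  rw [← PowerSeries.coeff_map, map_pow]
  rfl

lemma expC_phiPS_eq_hsymm : ∀ k : ℕ, expC (phiPS n) k = hsymm (Fin n) ℚ k := by
  intro k
  induction k using Nat.strong_induction_on with
  | _ k ih =>
    match k with
    | 0 => rw [expC_zero, hsymm_zero]
    | k + 1 =>
      have hc : ((k : MvPolynomial (Fin n) ℚ) + 1)
          = algebraMap ℚ (MvPolynomial (Fin n) ℚ) ((k : ℚ) + 1) := by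
        push_cast; simp [map_add, map_natCast, map_one]
      have hcne : ((k : MvPolynomial (Fin n) ℚ) + 1) ≠ 0 := by
        rw [hc]
        intro h
        have h2 := (algebraMap ℚ (MvPolynomial (Fin n) ℚ)).injective
          (by rw [h, map_zero] : algebraMap ℚ (MvPolynomial (Fin n) ℚ) ((k : ℚ) + 1)
            = algebraMap ℚ (MvPolynomial (Fin n) ℚ) 0)
        have : ((k : ℚ) + 1) ≠ 0 := by positivity
        exact this h2
      apply mul_right_cancel₀ hcne
      have hr : hsymm (Fin n) ℚ (k+1) * ((k : MvPolynomial (Fin n) ℚ) + 1)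
          = (k+1) • hsymm (Fin n) ℚ (k+1) := by
        rw [nsmul_eq_mul, mul_comm]
        push_cast
        ring
      rw [hr, newton_hsymm, expC_rec phiPS_constantCoeff]
      have hterm : ∀ i, i ∈ Finset.range (k+1) →
          (PowerSeries.coeff (i + 1) (phiPS n) * ((i : MvPolynomial (Fin n) ℚ) + 1))
              * expC (phiPS n) (k - i)
            = psum (Fin n) ℚ (i + 1) * hsymm (Fin n) ℚ (k - i) := by
        intro i hi
        rw [ih (k - i) (by omega), phiPS_coeff_succ]
        congr 1
        have hcast2 : ((i : MvPolynomial (Fin n) ℚ) + 1)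
            = algebraMap ℚ (MvPolynomial (Fin n) ℚ) ((i + 1 : ℕ) : ℚ) := by
          push_cast; simp [map_add, map_natCast, map_one]
        rw [hcast2, smul_mul_assoc, mul_comm, ← Algebra.smul_def, smul_smul,
          inv_mul_cancel₀ (by exact_mod_cast Nat.succ_ne_zero i : ((i + 1 : ℕ) : ℚ) ≠ 0), one_smul]
      exact Finset.sum_congr rfl hterm

lemma powerSub_sw_eq_hsymm (k : ℕ) : powerSub n (sw k) = hsymm (Fin n) ℚ k := by
  rw [powerSub_sw, expC_phiPS_eq_hsymm]

lemma powerSub_swZ (z : ℤ) : powerSub n (swZ z) = hZ n z := by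
  unfold swZ hZ
  split
  · exact powerSub_sw_eq_hsymm _
  · exact map_zero _

end MainProof

/-- Under `x_i ↦ p_i/i` the Schur–Weierstrass polynomial `σ_λ`
becomes the ordinary Schur polynomial `s_λ(u_1,…,u_n)`. -/
theorem stmt_10 (n m : ℕ) (lam : Fin m → ℕ) (hdec : Antitone lam)
    (hpos : ∀ i, 0 < lam i) :
    powerSub n (swSchur lam) = schurPoly n lam := by
  unfold swSchur schurPoly
  rw [show (powerSub n) (Matrix.det _) =
      (powerSub n : MvPolynomial ℕ ℚ →+* MvPolynomial (Fin n) ℚ) (Matrix.det _) from rfl,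
    RingHom.map_det]
  congr 1
  apply Matrix.ext
  intro i j
  simp only [RingHom.mapMatrix_apply, Matrix.map_apply, Matrix.of_apply]
  exact powerSub_swZ _
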